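/- Let p > 1, γ > 0, and δ_γ = γ^{(p−1)/p}/p^{1/p}. Define j : ℝ → ℝ by j(z) = δ_γ|z| − (|z| + (1/γ)(1−p)/p)^{1/p} if |z| > 1/γ, and j(z) = 0 if |z| ≤ 1/γ. Then j is differentiable at every point of ℝ, with derivative j'(z) = [δ_γ − (1/p)(|z| + (1/γ)(1−p)/p)^{(1−p)/p}]·sign(z) if |z| > 1/γ and j'(z) = 0 if |z| ≤ 1/γ; moreover this derivative is a continuous function of z, so j is continuously differentiable. -/

import Mathlib

/-- `δ_γ = γ^{(p-1)/p} / p^{1/p}`. -/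
noncomputable def deltaGamma (p γ : ℝ) : ℝ := γ ^ ((p - 1)/p) / p ^ ((1:ℝ)/p)

/-- The DC-component `j`. -/
noncomputable def jfun (p γ z : ℝ) : ℝ :=
  if |z| ≤ 1/γ then 0 else deltaGamma p γ * |z| - (|z| + (1/γ) * ((1 - p)/p)) ^ ((1:ℝ)/p)

/-- The claimed derivative of `j`. -/
noncomputable def jderiv (p γ z : ℝ) : ℝ :=
  if |z| ≤ 1/γ then 0
  else (deltaGamma p γ - (1/p) * (|z| + (1/γ) * ((1 - p)/p)) ^ ((1 - p)/p)) * Real.sign z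

lemma dg_eq {p γ : ℝ} (hp : 1 < p) (hγ : 0 < γ) :
    deltaGamma p γ = (1/p) * (1/(γ*p)) ^ ((1-p)/p) := by
  have hp0 : (0:ℝ) < p := one_pos.trans hp
  have hgp : (0:ℝ) < γ*p := mul_pos hγ hp0
  have hinv : (0:ℝ) < 1/(γ*p) := by positivity
  have h1 : (0:ℝ) < deltaGamma p γ := by rw [deltaGamma]; positivity
  have h2 : (0:ℝ) < (1/p) * (1/(γ*p)) ^ ((1-p)/p) := by positivity
  rw [← Real.exp_log h1, ← Real.exp_log h2]
  congr 1
  rw [deltaGamma, Real.log_div (by positivity) (by positivity),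
    Real.log_rpow hγ, Real.log_rpow hp0, Real.log_mul (by positivity) (by positivity),
    Real.log_rpow hinv, one_div (γ*p), Real.log_inv, Real.log_mul hγ.ne' hp0.ne',
    one_div p, Real.log_inv]
  field_simp
  ring

lemma dg_val {p γ : ℝ} (hp : 1 < p) (hγ : 0 < γ) :
    deltaGamma p γ * (1/γ) = (1/(γ*p)) ^ ((1:ℝ)/p) := by
  have hp0 : (0:ℝ) < p := one_pos.trans hp
  have hgp : (0:ℝ) < γ*p := mul_pos hγ hp0
  have hinv : (0:ℝ) < 1/(γ*p) := by positivity
  have h1 : (0:ℝ) < deltaGamma p γ * (1/γ) := by rw [deltaGamma]; positivity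
  have h2 : (0:ℝ) < (1/(γ*p)) ^ ((1:ℝ)/p) := by positivity
  rw [← Real.exp_log h1, ← Real.exp_log h2]
  congr 1
  rw [deltaGamma, Real.log_mul (by positivity) (by positivity),
    Real.log_div (by positivity) (by positivity),
    Real.log_rpow hγ, Real.log_rpow hp0,
    Real.log_rpow hinv, one_div (γ*p), Real.log_inv, Real.log_mul hγ.ne' hp0.ne',
    one_div γ, Real.log_inv]
  field_simp
  ring

theorem stmt_6 (p γ : ℝ) (hp : 1 < p) (hγ : 0 < γ) :
    (∀ z : ℝ, HasDerivAt (jfun p γ) (jderiv p γ z) z) ∧ Continuous (jderiv p γ) := by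
  have hp0 : (0:ℝ) < p := one_pos.trans hp
  have hγ0 : (0:ℝ) < 1/γ := by positivity
  have hgp : (0:ℝ) < 1/(γ*p) := by positivity
  set δ : ℝ := deltaGamma p γ with hδdef
  set c : ℝ := (1/γ) * ((1 - p)/p) with hc
  have hbc : 1/γ + c = 1/(γ*p) := by rw [hc]; field_simp; ring
  have hδ : δ = (1/p) * (1/(γ*p)) ^ ((1-p)/p) := dg_eq hp hγ
  have hδv : δ * (1/γ) = (1/(γ*p)) ^ ((1:ℝ)/p) := dg_val hp hγ
  -- derivative of the outer function
  have hF : ∀ t : ℝ, 1/(γ*p) ≤ t + c →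
      HasDerivAt (fun s => δ * s - (s + c) ^ ((1:ℝ)/p))
        (δ - (1/p) * (t + c) ^ ((1-p)/p)) t := by
    intro t ht
    have htc : 0 < t + c := lt_of_lt_of_le hgp ht
    have h1 : HasDerivAt (fun s : ℝ => s + c) 1 t := (hasDerivAt_id t).add_const c
    have h2 := (Real.hasDerivAt_rpow_const (x := t + c) (p := (1:ℝ)/p) (Or.inl htc.ne')).comp t h1
    have hexp : p⁻¹ - 1 = (1-p)/p := by field_simp
    have h3 : HasDerivAt (fun s : ℝ => (s + c) ^ ((1:ℝ)/p)) ((1/p) * (t+c) ^ ((1-p)/p)) t := by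
      simpa [Function.comp_def, hexp, one_div] using h2
    simpa [Pi.sub_def] using ((hasDerivAt_id t).const_mul δ).sub h3
  have hGd0 : δ - (1/p) * ((1/γ) + c) ^ ((1-p)/p) = 0 := by rw [hbc, hδ]; ring
  have hGv0 : δ * (1/γ) - ((1/γ) + c) ^ ((1:ℝ)/p) = 0 := by rw [hbc, hδv, sub_self]
  have hjval : jfun p γ (1/γ) = 0 := by
    simp only [jfun]
    rw [if_pos (le_of_eq (abs_of_pos hγ0))]
  -- derivative at the positive boundary point
  have hpos : HasDerivAt (jfun p γ) 0 (1/γ) := by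
    have hL : HasDerivWithinAt (jfun p γ) 0 (Set.Iic (1/γ)) (1/γ) := by
      have hnb : ∀ᶠ y in nhds (1/γ), -(1/γ) < y := eventually_gt_nhds (by linarith)
      have hev : jfun p γ =ᶠ[nhdsWithin (1/γ) (Set.Iic (1/γ))] (fun _ => (0:ℝ)) := by
        filter_upwards [self_mem_nhdsWithin, hnb.filter_mono nhdsWithin_le_nhds] with y hy1 hy2
        simp only [jfun]
        rw [if_pos (abs_le.mpr ⟨le_of_lt hy2, hy1⟩)]
      exact (hasDerivWithinAt_const _ _ 0).congr_of_eventuallyEq hev hjval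
    have hR : HasDerivWithinAt (jfun p γ) 0 (Set.Ici (1/γ)) (1/γ) := by
      have hG : HasDerivAt (fun s => δ * s - (s + c) ^ ((1:ℝ)/p)) 0 (1/γ) := by
        have h := hF (1/γ) hbc.ge
        rwa [hGd0] at h
      have hev : jfun p γ =ᶠ[nhdsWithin (1/γ) (Set.Ici (1/γ))]
          (fun s => δ * s - (s + c) ^ ((1:ℝ)/p)) := by
        filter_upwards [self_mem_nhdsWithin] with y hy
        rcases eq_or_lt_of_le (Set.mem_Ici.mp hy) with h | h
        · rw [← h, hjval, hGv0]
        · have hy0 : 0 < y := lt_trans hγ0 h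
          simp only [jfun]
          rw [if_neg (by rw [abs_of_pos hy0]; exact not_le.mpr h), abs_of_pos hy0]
      exact hG.hasDerivWithinAt.congr_of_eventuallyEq hev (by rw [hjval, hGv0])
    have h := hL.union hR
    rwa [Set.Iic_union_Ici, hasDerivWithinAt_univ] at h
  have hmain : ∀ z : ℝ, HasDerivAt (jfun p γ) (jderiv p γ z) z := by
    intro z
    rcases lt_trichotomy (|z|) (1/γ) with hlt | heq | hgt
    · have hjd : jderiv p γ z = 0 := by simp only [jderiv]; rw [if_pos hlt.le]
      rw [hjd]
      have hop : IsOpen {y : ℝ | |y| < 1/γ} := isOpen_lt continuous_abs continuous_const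
      have hev : jfun p γ =ᶠ[nhds z] (fun _ => (0:ℝ)) := by
        filter_upwards [hop.mem_nhds hlt] with y hy
        simp only [jfun]
        rw [if_pos (le_of_lt hy)]
      exact (hasDerivAt_const z (0:ℝ)).congr_of_eventuallyEq hev
    · have hjd : jderiv p γ z = 0 := by simp only [jderiv]; rw [if_pos heq.le]
      rw [hjd]
      rcases (abs_eq hγ0.le).mp heq with rfl | rfl
      · exact hpos
      · have h1 : HasDerivAt (fun y : ℝ => -y) (-1 : ℝ) (-(1/γ)) := hasDerivAt_neg _
        have h2 : HasDerivAt (jfun p γ) 0 (-(-(1/γ))) := by rw [neg_neg]; exact hpos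
        have h3 := h2.comp (-(1/γ)) h1
        have heqf : (jfun p γ) ∘ (fun y : ℝ => -y) = jfun p γ := by
          funext y; simp [jfun, abs_neg]
        rw [heqf] at h3
        simpa using h3
    · have hz0 : z ≠ 0 := by intro h; rw [h, abs_zero] at hgt; linarith
      have habs : HasDerivAt (fun y : ℝ => |y|) (Real.sign z) z := by
        rcases hz0.lt_or_gt with hneg | hposz
        · have hev : (fun y : ℝ => |y|) =ᶠ[nhds z] (fun y : ℝ => -y) := by
            filter_upwards [eventually_lt_nhds hneg] with y hy
            exact abs_of_neg hy
          rw [Real.sign_of_neg hneg]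
          exact (hasDerivAt_neg z).congr_of_eventuallyEq hev
        · have hev : (fun y : ℝ => |y|) =ᶠ[nhds z] (fun y : ℝ => y) := by
            filter_upwards [eventually_gt_nhds hposz] with y hy
            exact abs_of_pos hy
          rw [Real.sign_of_pos hposz]
          exact (hasDerivAt_id z).congr_of_eventuallyEq hev
      have hc8 : 1/(γ*p) ≤ |z| + c := by rw [← hbc]; linarith
      have hFz := (hF (|z|) hc8).comp z habs
      have hop : IsOpen {y : ℝ | 1/γ < |y|} := isOpen_lt continuous_const continuous_abs
      have hev : jfun p γ =ᶠ[nhds z]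
          ((fun s => δ * s - (s + c) ^ ((1:ℝ)/p)) ∘ (fun y : ℝ => |y|)) := by
        filter_upwards [hop.mem_nhds hgt] with y hy
        simp only [jfun, Function.comp]
        rw [if_neg (not_le.mpr hy)]
      have hjd : jderiv p γ z = (δ - (1/p) * (|z| + c) ^ ((1-p)/p)) * Real.sign z := by
        simp only [jderiv]; rw [if_neg (not_le.mpr hgt)]
      rw [hjd]
      exact hFz.congr_of_eventuallyEq hev
  refine ⟨hmain, ?_⟩
  -- continuity of the derivative
  have hk : Continuous (fun z : ℝ => δ - (1/p) * (max (|z| + c) (1/(γ*p))) ^ ((1-p)/p)) := by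
    have h1 : Continuous fun z : ℝ => max (|z| + c) (1/(γ*p)) :=
      (continuous_abs.add continuous_const).max continuous_const
    have h2 : Continuous fun z : ℝ => (max (|z| + c) (1/(γ*p))) ^ ((1-p)/p) :=
      h1.rpow_const (fun z => Or.inl (ne_of_gt (lt_of_lt_of_le hgp (le_max_right _ _))))
    exact continuous_const.sub (continuous_const.mul h2)
  have hσ : Continuous fun z : ℝ => max (-1 : ℝ) (min 1 (γ * z)) :=
    continuous_const.max (continuous_const.min (continuous_const.mul continuous_id))
  have hEq : jderiv p γ = fun z =>
      (δ - (1/p) * (max (|z| + c) (1/(γ*p))) ^ ((1-p)/p)) * max (-1 : ℝ) (min 1 (γ * z)) := by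
    funext z
    by_cases hz : |z| ≤ 1/γ
    · have hmax : max (|z| + c) (1/(γ*p)) = 1/(γ*p) :=
        max_eq_right (by rw [← hbc]; linarith)
      simp only [jderiv]
      rw [if_pos hz, hmax]
      have h0 : δ - (1/p) * (1/(γ*p)) ^ ((1-p)/p) = 0 := by rw [hδ]; ring
      rw [h0, zero_mul]
    · push_neg at hz
      have hmax : max (|z| + c) (1/(γ*p)) = |z| + c :=
        max_eq_left (by rw [← hbc]; linarith)
      simp only [jderiv]
      rw [if_neg (not_le.mpr hz), hmax]
      congr 1
      have hz0 : z ≠ 0 := by intro h; rw [h, abs_zero] at hz; linarith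
      rcases hz0.lt_or_gt with hneg | hposz
      · have hzlt : z < -(1/γ) := by rw [abs_of_neg hneg] at hz; linarith
        have h1 := mul_lt_mul_of_pos_left hzlt hγ
        have hone : γ * (1/γ) = 1 := by field_simp
        have hzl : γ * z ≤ -1 := by nlinarith
        rw [Real.sign_of_neg hneg, min_eq_right (by linarith), max_eq_left hzl]
      · have hzg : 1 ≤ γ * z := by
          have : 1/γ < z := by rwa [abs_of_pos hposz] at hz
          rw [div_lt_iff₀ hγ] at this
          linarith [this]
        rw [Real.sign_of_pos hposz, min_eq_left hzg, max_eq_right (by linarith)]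
  rw [hEq]
  exact hk.mul hσ
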